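/- arXiv:1603.08539 — 2 statements merged into one kernel-verified Lean document; each statement's English description precedes it below -/
import Mathlib

section
/- For 0 < q < p ≤ 1, natural number n, and x ∈ [0,1], the (p,q)-Meyer-König and Zeller operator reproduces linear functions: M_{n,p,q}(t; x) = x, i.e., p^{-n(n+1)/2} Σ_{k=0}^{∞} [n+k choose k]_{p,q} x^k p^{-kn} ∏_{s=0}^{n}(p^s - q^s x) · (p^n [k]_{p,q} / [n+k]_{p,q}) = x for x ∈ [0,1). -/
open Filter Topology

noncomputable def pqInt (p q : ℝ) (n : ℕ) : ℝ := (p ^ n - q ^ n) / (p - q)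

noncomputable def pqFact (p q : ℝ) (n : ℕ) : ℝ :=
  ∏ j ∈ Finset.range n, pqInt p q (j + 1)

noncomputable def pqBinom (p q : ℝ) (n k : ℕ) : ℝ :=
  pqFact p q n / (pqFact p q k * pqFact p q (n - k))

noncomputable def mkz (p q : ℝ) (n : ℕ) (f : ℝ → ℝ) (x : ℝ) : ℝ :=
  if x = 1 then f 1 else
    (p ^ (n * (n + 1) / 2))⁻¹ *
      ∑' k : ℕ, pqBinom p q (n + k) k * x ^ k * (p ^ (k * n))⁻¹ *
        (∏ s ∈ Finset.range (n + 1), (p ^ s - q ^ s * x)) *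
        f (p ^ n * pqInt p q k / pqInt p q (n + k))

noncomputable def supNorm (g : ℝ → ℝ) : ℝ :=
  sSup ((fun x => |g x|) '' Set.Icc (0 : ℝ) 1)

noncomputable def modCont (f : ℝ → ℝ) (δ : ℝ) : ℝ :=
  sSup ((fun p : ℝ × ℝ => |f p.1 - f p.2|) ''
    {p : ℝ × ℝ | p.1 ∈ Set.Icc (0 : ℝ) 1 ∧ p.2 ∈ Set.Icc (0 : ℝ) 1 ∧ |p.1 - p.2| ≤ δ})

def StatLim (x : ℕ → ℝ) (L : ℝ) : Prop :=
  ∀ ε > 0, Filter.Tendsto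
    (fun n => (((Finset.range (n + 1)).filter (fun k => ε ≤ |x k - L|)).card : ℝ) / (n : ℝ))
    Filter.atTop (nhds 0)

section aux

variable {p q : ℝ}

lemma pqInt_pos (hq : 0 < q) (hqp : q < p) {m : ℕ} (hm : 0 < m) : 0 < pqInt p q m := by
  have h1 : q ^ m < p ^ m := pow_lt_pow_left₀ hqp hq.le hm.ne'
  have h2 : 0 < p - q := sub_pos.mpr hqp
  exact div_pos (sub_pos.mpr h1) h2

lemma pqFact_pos (hq : 0 < q) (hqp : q < p) (m : ℕ) : 0 < pqFact p q m := by
  refine Finset.prod_pos fun j _ => pqInt_pos hq hqp (Nat.succ_pos j)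

lemma pqFact_succ (m : ℕ) : pqFact p q (m + 1) = pqFact p q m * pqInt p q (m + 1) :=
  Finset.prod_range_succ _ _

lemma pqBinom_pos (hq : 0 < q) (hqp : q < p) (m k : ℕ) : 0 < pqBinom p q m k :=
  div_pos (pqFact_pos hq hqp _) (mul_pos (pqFact_pos hq hqp _) (pqFact_pos hq hqp _))

lemma pqInt_add (hqp : q < p) (a b : ℕ) :
    pqInt p q (a + b) = p ^ a * pqInt p q b + q ^ b * pqInt p q a := by
  have h : p - q ≠ 0 := sub_ne_zero.mpr hqp.ne'
  simp only [pqInt, pow_add]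
  field_simp
  ring

lemma pqBinom_shift (hq : 0 < q) (hqp : q < p) (n k : ℕ) :
    pqBinom p q (n + (k + 1)) (k + 1) =
      pqBinom p q (n + k) k * (pqInt p q (n + k + 1) / pqInt p q (k + 1)) := by
  have h1 : pqFact p q k ≠ 0 := (pqFact_pos hq hqp k).ne'
  have h2 : pqFact p q n ≠ 0 := (pqFact_pos hq hqp n).ne'
  have h3 : pqInt p q (k + 1) ≠ 0 := (pqInt_pos hq hqp (Nat.succ_pos k)).ne'
  have e1 : n + (k+1) - (k+1) = n := by omega
  have e2 : n + k - k = n := by omega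
  have e3 : n + (k+1) = (n + k) + 1 := by omega
  rw [pqBinom, pqBinom, e1, e2, e3, pqFact_succ (n+k), pqFact_succ k,
    show n + k + 1 = n + (k+1) by omega, e3]
  field_simp

lemma pqBinom_pascal (hq : 0 < q) (hqp : q < p) (m k : ℕ) :
    pqBinom p q ((m+1) + (k+1)) (k+1) =
      p ^ (k+1) * pqBinom p q (m + (k+1)) (k+1) + q ^ (m+1) * pqBinom p q ((m+1) + k) k := by
  have h1 : pqFact p q k ≠ 0 := (pqFact_pos hq hqp k).ne'
  have h2 : pqFact p q m ≠ 0 := (pqFact_pos hq hqp m).ne'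
  have h3 : pqInt p q (k + 1) ≠ 0 := (pqInt_pos hq hqp (Nat.succ_pos k)).ne'
  have h4 : pqInt p q (m + 1) ≠ 0 := (pqInt_pos hq hqp (Nat.succ_pos m)).ne'
  have key : pqInt p q ((m+1)+(k+1)) = p ^ (k+1) * pqInt p q (m+1) + q ^ (m+1) * pqInt p q (k+1) := by
    rw [show (m+1)+(k+1) = (k+1)+(m+1) by omega, pqInt_add hqp]
  have e1 : (m+1) + (k+1) - (k+1) = m+1 := by omega
  have e2 : m + (k+1) - (k+1) = m := by omega
  have e3 : (m+1) + k - k = m+1 := by omega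
  rw [pqBinom, pqBinom, pqBinom, e1, e2, e3,
    show (m+1) + (k+1) = (m + (k+1)) + 1 by omega, pqFact_succ (m + (k+1)),
    show m + (k+1) + 1 = (m+1)+(k+1) by omega, key,
    pqFact_succ k, pqFact_succ m]
  have h5 : pqFact p q (m + (k+1)) ≠ 0 := (pqFact_pos hq hqp _).ne'
  have e4 : (m+1) + k = m + (k + 1) := by omega
  rw [e4]
  field_simp

end aux

section main
variable {p q : ℝ}

lemma summable_T (hq : 0 < q) (hqp : q < p) (n : ℕ) {x : ℝ} (hx0 : 0 ≤ x) (hx1 : x < 1) :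
    Summable (fun k => pqBinom p q (n + k) k * x ^ k * (p ^ (k * n))⁻¹) := by
  have hp0 : 0 < p := hq.trans hqp
  set r : ℝ := (1 + x) / 2 with hr
  have hr1 : r < 1 := by rw [hr]; linarith
  have hrx : 0 < r - x := by rw [hr]; linarith
  have hr0 : 0 < r := by rw [hr]; linarith
  have hqp1 : q / p < 1 := (div_lt_one hp0).mpr hqp
  have hqppos : 0 < q / p := div_pos hq hp0
  have hev : ∀ᶠ k : ℕ in Filter.atTop, (q / p) ^ k < (r - x) / r :=
    (tendsto_pow_atTop_nhds_zero_of_lt_one hqppos.le hqp1).eventually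
      (gt_mem_nhds (div_pos hrx hr0))
  apply summable_of_ratio_norm_eventually_le hr1
  filter_upwards [hev] with k hk
  have hfpos : ∀ j, 0 ≤ pqBinom p q (n + j) j * x ^ j * (p ^ (j * n))⁻¹ := fun j => by
    have := pqBinom_pos hq hqp (n + j) j
    positivity
  rw [Real.norm_of_nonneg (hfpos (k+1)), Real.norm_of_nonneg (hfpos k)]
  rw [pqBinom_shift hq hqp n k]
  have hIk : 0 < pqInt p q (k + 1) := pqInt_pos hq hqp (Nat.succ_pos k)
  have hIn : 0 < pqInt p q (n + k + 1) := pqInt_pos hq hqp (Nat.succ_pos _)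
  have hB : 0 < pqBinom p q (n + k) k := pqBinom_pos hq hqp _ _
  -- key inequality : pqInt (n+k+1) * x ≤ r * pqInt (k+1) * p ^ n
  have key : pqInt p q (n + k + 1) * x ≤ r * pqInt p q (k + 1) * p ^ n := by
    have hpq : 0 < p - q := sub_pos.mpr hqp
    have eL : pqInt p q (n + k + 1) * x = (p ^ (n + k + 1) - q ^ (n + k + 1)) * x / (p - q) := by
      rw [pqInt]; ring
    have eR : r * pqInt p q (k + 1) * p ^ n
        = r * (p ^ (k + 1) - q ^ (k + 1)) * p ^ n / (p - q) := by
      rw [pqInt]; ring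
    rw [eL, eR, div_le_div_iff_of_pos_right hpq]
    rw [show r * (p ^ (k+1) - q ^ (k+1)) * p ^ n = r * (p ^ n * (p ^ (k+1) - q ^ (k+1))) by ring]
    have h1 : (p ^ (n + k + 1) - q ^ (n + k + 1)) * x ≤ p ^ (n + k + 1) * x := by
      have : 0 ≤ q ^ (n + k + 1) := by positivity
      nlinarith
    refine h1.trans ?_
    have h2 : r * q ^ (k + 1) ≤ (r - x) * p ^ (k + 1) := by
      have hk' : (q / p) ^ (k + 1) ≤ (r - x) / r := by
        refine le_trans ?_ hk.le
        exact pow_le_pow_of_le_one hqppos.le hqp1.le (Nat.le_succ k)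
      have hpk : (0:ℝ) < p ^ (k + 1) := by positivity
      rw [div_pow, div_le_div_iff₀ hpk hr0] at hk'
      linarith [hk']
    have : p ^ (n + k + 1) * x = p ^ n * (p ^ (k+1) * x) := by ring
    rw [this, show r * (p ^ n * (p ^ (k+1) - q ^ (k+1))) = p ^ n * (r * (p ^ (k+1) - q^(k+1))) by ring]
    have hpn : (0:ℝ) ≤ p ^ n := by positivity
    apply mul_le_mul_of_nonneg_left _ hpn
    nlinarith
  -- conclude
  have hpow : (p ^ ((k+1) * n))⁻¹ = (p ^ (k * n))⁻¹ * (p ^ n)⁻¹ := by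
    rw [show (k+1)*n = k*n + n by ring, pow_add, mul_inv]
  rw [hpow]
  have hxk : (0:ℝ) ≤ x ^ k := by positivity
  have hpkn : (0:ℝ) < (p ^ (k * n))⁻¹ := by positivity
  have hpn : (0:ℝ) < (p ^ n)⁻¹ := by positivity
  calc pqBinom p q (n + k) k * (pqInt p q (n + k + 1) / pqInt p q (k + 1)) * x ^ (k+1) *
        ((p ^ (k * n))⁻¹ * (p ^ n)⁻¹)
      = (pqBinom p q (n + k) k * x ^ k * (p ^ (k * n))⁻¹) *
        ((pqInt p q (n + k + 1) * x) / (pqInt p q (k + 1) * p ^ n)) := by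
        rw [pow_succ]; field_simp
    _ ≤ (pqBinom p q (n + k) k * x ^ k * (p ^ (k * n))⁻¹) * r := by
        apply mul_le_mul_of_nonneg_left _ (hfpos k)
        rw [div_le_iff₀ (by positivity)]
        calc pqInt p q (n + k + 1) * x ≤ r * pqInt p q (k + 1) * p ^ n := key
          _ = r * (pqInt p q (k + 1) * p ^ n) := by ring
    _ = r * (pqBinom p q (n + k) k * x ^ k * (p ^ (k * n))⁻¹) := by ring

end main

lemma prod_pos_aux {p q : ℝ} (hq : 0 < q) (hqp : q < p) {x : ℝ} (hx0 : 0 ≤ x) (hx1 : x < 1)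
    (n : ℕ) : 0 < ∏ s ∈ Finset.range (n + 1), (p ^ s - q ^ s * x) := by
  refine Finset.prod_pos fun s _ => ?_
  have h1 : q ^ s * x < q ^ s := by
    calc q ^ s * x < q ^ s * 1 := by
          apply mul_lt_mul_of_pos_left hx1 (by positivity)
      _ = q ^ s := mul_one _
  have h2 : q ^ s ≤ p ^ s := pow_le_pow_left₀ hq.le hqp.le s
  linarith

lemma tsum_T {p q : ℝ} (hq : 0 < q) (hqp : q < p) (n : ℕ) {x : ℝ} (hx0 : 0 ≤ x) (hx1 : x < 1) :
    ∑' k : ℕ, pqBinom p q (n + k) k * x ^ k * (p ^ (k * n))⁻¹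
      = p ^ (n * (n + 1) / 2) / ∏ s ∈ Finset.range (n + 1), (p ^ s - q ^ s * x) := by
  have hp0 : 0 < p := hq.trans hqp
  induction n with
  | zero =>
    have hfact0 : pqFact p q 0 = 1 := by simp [pqFact]
    have h1 : ∀ k : ℕ, pqBinom p q (0 + k) k * x ^ k * (p ^ (k * 0))⁻¹ = x ^ k := by
      intro k
      have hf : pqFact p q k ≠ 0 := (pqFact_pos hq hqp k).ne'
      simp only [Nat.zero_add, Nat.mul_zero, pow_zero, inv_one, mul_one, pqBinom,
        Nat.sub_self, hfact0]
      rw [div_self hf, one_mul]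
    rw [tsum_congr h1, tsum_geometric_of_lt_one hx0 hx1]
    norm_num
  | succ m ih =>
    set f : ℕ → ℝ := fun k => pqBinom p q ((m+1) + k) k * x ^ k * (p ^ (k * (m+1)))⁻¹ with hfdef
    set u : ℕ → ℝ := fun k => pqBinom p q (m + k) k * x ^ k * (p ^ (k * m))⁻¹ with hudef
    have hf : Summable f := summable_T hq hqp (m+1) hx0 hx1
    have hu : Summable u := summable_T hq hqp m hx0 hx1
    set c : ℝ := q ^ (m+1) * x * (p ^ (m+1))⁻¹ with hcdef
    have hstep : ∀ k : ℕ, f (k + 1) = u (k + 1) + c * f k := by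
      intro k
      simp only [hfdef, hudef, hcdef]
      rw [show (m+1) + (k+1) = (m+1) + (k+1) from rfl, pqBinom_pascal hq hqp m k]
      have e1 : (k+1) * (m+1) = (k+1) * m + (k+1) := by ring
      have e2 : (k+1) * (m+1) = k * (m+1) + (m+1) := by ring
      have hpne : (p:ℝ) ≠ 0 := hp0.ne'
      rw [show ((k+1) * (m+1)) = (k+1) * m + (k+1) from e1,
        show k * (m+1) = k * m + k by ring]
      field_simp
      ring
    have hu1 : Summable (fun k => u (k + 1)) := (summable_nat_add_iff 1).mpr hu
    have hcf : Summable (fun k => c * f k) := hf.mul_left c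
    have hbin0 : ∀ j, pqBinom p q j 0 = 1 := fun j => by
      simp only [pqBinom, Nat.sub_zero]
      rw [show pqFact p q 0 = 1 by simp [pqFact], one_mul,
        div_self (pqFact_pos hq hqp j).ne']
    have hf0 : f 0 = 1 := by simp [hfdef, hbin0]
    have hu0 : u 0 = 1 := by simp [hudef, hbin0]
    have h1 : ∑' k, f (k + 1) = (∑' k, u (k + 1)) + c * ∑' k, f k := by
      rw [tsum_congr hstep, Summable.tsum_add hu1 hcf, tsum_mul_left]
    have h2 : ∑' k, u (k + 1) = (∑' k, u k) - 1 := by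
      rw [Summable.tsum_eq_zero_add hu, hu0]; ring
    have key : ∑' k, f k = (∑' k, u k) + c * ∑' k, f k := by
      conv_lhs => rw [Summable.tsum_eq_zero_add hf]
      rw [h1, h2, hf0]; ring
    have hdpos : 0 < p ^ (m+1) - q ^ (m+1) * x := by
      have h1 : q ^ (m+1) * x < q ^ (m+1) := by
        calc q ^ (m+1) * x < q ^ (m+1) * 1 := mul_lt_mul_of_pos_left hx1 (by positivity)
          _ = q ^ (m+1) := mul_one _
      have h2 : q ^ (m+1) ≤ p ^ (m+1) := pow_le_pow_left₀ hq.le hqp.le _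
      linarith
    have hc1 : 1 - c = (p ^ (m+1) - q ^ (m+1) * x) / p ^ (m+1) := by
      rw [hcdef]; field_simp
    have hsolve : ∑' k, f k = (∑' k, u k) * p ^ (m+1) / (p ^ (m+1) - q ^ (m+1) * x) := by
      have h : (∑' k, f k) * (1 - c) = ∑' k, u k := by linear_combination key
      rw [hc1] at h
      rw [eq_div_iff hdpos.ne']
      have hp1 : (p : ℝ) ^ (m+1) ≠ 0 := by positivity
      field_simp at h
      linarith [h]
    rw [hsolve, ih]
    rw [Finset.prod_range_succ (fun s => p ^ s - q ^ s * x) (m+1)]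
    have hexp : (m+1) * ((m+1) + 1) / 2 = m * (m+1) / 2 + (m+1) := by
      have h2 : (m+1) * ((m+1) + 1) = m * (m+1) + (m+1) * 2 := by ring
      rw [h2, Nat.add_mul_div_right _ _ (by norm_num : 0 < 2)]
    rw [hexp, pow_add]
    have hP : (0:ℝ) < ∏ s ∈ Finset.range (m + 1), (p ^ s - q ^ s * x) :=
      prod_pos_aux hq hqp hx0 hx1 m
    rw [div_mul_eq_mul_div, div_div]
    ring

theorem mkz_id' (p q : ℝ) (hq : 0 < q) (hqp : q < p) (hp : p ≤ 1)
    (n : ℕ) (x : ℝ) (hx : x ∈ Set.Icc (0 : ℝ) 1) :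
    (if x = 1 then (1:ℝ) else
    (p ^ (n * (n + 1) / 2))⁻¹ *
      ∑' k : ℕ, pqBinom p q (n + k) k * x ^ k * (p ^ (k * n))⁻¹ *
        (∏ s ∈ Finset.range (n + 1), (p ^ s - q ^ s * x)) *
        (p ^ n * pqInt p q k / pqInt p q (n + k))) = x := by
  obtain ⟨hx0, hxle⟩ := hx
  by_cases hx1 : x = 1
  · simp [hx1]
  · have hxlt : x < 1 := lt_of_le_of_ne hxle hx1
    have hp0 : 0 < p := hq.trans hqp
    rw [if_neg hx1]
    have hPpos : 0 < ∏ s ∈ Finset.range (n + 1), (p ^ s - q ^ s * x) :=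
      prod_pos_aux hq hqp hx0 hxlt n
    have hEne : (p : ℝ) ^ (n * (n + 1) / 2) ≠ 0 := by positivity
    set g : ℕ → ℝ := fun k => pqBinom p q (n + k) k * x ^ k * (p ^ (k * n))⁻¹ *
        (∏ s ∈ Finset.range (n + 1), (p ^ s - q ^ s * x)) *
        (p ^ n * pqInt p q k / pqInt p q (n + k)) with hgdef
    set u : ℕ → ℝ := fun k => pqBinom p q (n + k) k * x ^ k * (p ^ (k * n))⁻¹ with hudef
    have hus : Summable u := summable_T hq hqp n hx0 hxlt
    have hg0 : g 0 = 0 := by simp [hgdef, pqInt]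
    have hgs : ∀ k, g (k + 1) =
        (x * ∏ s ∈ Finset.range (n + 1), (p ^ s - q ^ s * x)) * u k := by
      intro k
      have hIk : pqInt p q (k+1) ≠ 0 := (pqInt_pos hq hqp (Nat.succ_pos k)).ne'
      have hIn : pqInt p q (n+k+1) ≠ 0 := (pqInt_pos hq hqp (Nat.succ_pos _)).ne'
      simp only [hgdef, hudef]
      rw [pqBinom_shift hq hqp n k, show n + (k + 1) = n + k + 1 by omega,
        show (k+1) * n = k * n + n by ring]
      field_simp
      ring
    have hgsum : Summable g := by
      apply (summable_nat_add_iff 1).mp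
      exact Summable.congr (hus.mul_left _) (fun k => (hgs k).symm)
    have htsum : ∑' k, g k = x * p ^ (n * (n + 1) / 2) := by
      rw [Summable.tsum_eq_zero_add hgsum, hg0, tsum_congr hgs, tsum_mul_left,
        tsum_T hq hqp n hx0 hxlt]
      generalize (∏ s ∈ Finset.range (n + 1), (p ^ s - q ^ s * x)) = P at hPpos ⊢
      field_simp
      ring
    rw [htsum]
    field_simp

theorem mkz_id (p q : ℝ) (hq : 0 < q) (hqp : q < p) (hp : p ≤ 1)
    (n : ℕ) (x : ℝ) (hx : x ∈ Set.Icc (0 : ℝ) 1) :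
    mkz p q n (fun t => t) x = x := by
  exact mkz_id' p q hq hqp hp n x hx
end

section
/- For 0 < q < p ≤ 1, natural number n, and x ∈ [0,1], the second moment of the (p,q)-Meyer-König and Zeller operator satisfies the two-sided estimate x² ≤ M_{n,p,q}(t²; x) ≤ (p^n / [n+1]_{p,q}) x + x². -/
open Filter Topology

section auxMKZ

variable {t : ℝ}

lemma qi_eq (m : ℕ) : pqInt 1 t m = (1 - t ^ m) / (1 - t) := by
  simp [pqInt]

lemma qi_pos (ht0 : 0 < t) (ht1 : t < 1) {m : ℕ} (hm : 0 < m) : 0 < pqInt 1 t m := by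
  rw [qi_eq]
  apply div_pos _ (by linarith)
  have : t ^ m < 1 := pow_lt_one₀ ht0.le ht1 hm.ne'
  linarith

lemma qi_nonneg (ht0 : 0 < t) (ht1 : t < 1) (m : ℕ) : 0 ≤ pqInt 1 t m := by
  rcases Nat.eq_zero_or_pos m with h | h
  · simp [h, pqInt]
  · exact (qi_pos ht0 ht1 h).le

lemma qi_le (ht0 : 0 < t) (ht1 : t < 1) (m : ℕ) : pqInt 1 t m ≤ (1 - t)⁻¹ := by
  rw [qi_eq, div_le_iff₀ (by linarith : (0:ℝ) < 1 - t)]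
  have : 0 ≤ t ^ m := pow_nonneg ht0.le m
  rw [inv_mul_cancel₀ (by linarith : (1:ℝ) - t ≠ 0)]
  linarith

lemma qi_mono (ht0 : 0 < t) (ht1 : t < 1) {m m' : ℕ} (h : m ≤ m') :
    pqInt 1 t m ≤ pqInt 1 t m' := by
  rw [qi_eq, qi_eq]
  have h2 : t ^ m' ≤ t ^ m := pow_le_pow_of_le_one ht0.le ht1.le h
  apply div_le_div_of_nonneg_right (by linarith) (by linarith)

lemma qi_add (a b : ℕ) : pqInt (1:ℝ) t (a + b) = pqInt 1 t a + t ^ a * pqInt 1 t b := by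
  rw [qi_eq, qi_eq, qi_eq]
  field_simp
  ring_nf

lemma qf_zero : pqFact (1:ℝ) t 0 = 1 := by simp [pqFact]

lemma qf_succ (n : ℕ) : pqFact (1:ℝ) t (n + 1) = pqFact 1 t n * pqInt 1 t (n + 1) :=
  Finset.prod_range_succ _ n

lemma qf_pos (ht0 : 0 < t) (ht1 : t < 1) (n : ℕ) : 0 < pqFact 1 t n :=
  Finset.prod_pos fun j _ => qi_pos ht0 ht1 (Nat.succ_pos j)

lemma qb_eq (n k : ℕ) :
    pqBinom (1:ℝ) t (n + k) k = pqFact 1 t (n + k) / (pqFact 1 t k * pqFact 1 t n) := by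
  rw [pqBinom, Nat.add_sub_cancel]

lemma qb_nonneg (ht0 : 0 < t) (ht1 : t < 1) (n k : ℕ) : 0 ≤ pqBinom 1 t (n + k) k := by
  rw [qb_eq]
  exact div_nonneg (qf_pos ht0 ht1 _).le (mul_nonneg (qf_pos ht0 ht1 _).le (qf_pos ht0 ht1 _).le)

lemma qb_zero (ht0 : 0 < t) (ht1 : t < 1) (n : ℕ) : pqBinom 1 t (n + 0) 0 = 1 := by
  rw [qb_eq, qf_zero, one_mul, add_zero, div_self (qf_pos ht0 ht1 n).ne']

lemma qb_le (ht0 : 0 < t) (ht1 : t < 1) (n k : ℕ) :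
    pqBinom 1 t (n + k) k ≤ (1 - t)⁻¹ ^ n / pqFact 1 t n := by
  rw [qb_eq]
  have h1 : pqFact (1:ℝ) t (n + k) = pqFact 1 t k * ∏ i ∈ Finset.range n, pqInt 1 t (k + i + 1) := by
    rw [add_comm n k, pqFact, Finset.prod_range_add]
    rfl
  have hP : (∏ i ∈ Finset.range n, pqInt (1:ℝ) t (k + i + 1)) ≤ (1 - t)⁻¹ ^ n := by
    calc ∏ i ∈ Finset.range n, pqInt (1:ℝ) t (k + i + 1) ≤ ∏ i ∈ Finset.range n, (1 - t)⁻¹ :=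
          Finset.prod_le_prod (fun i _ => qi_nonneg ht0 ht1 _) (fun i _ => qi_le ht0 ht1 _)
      _ = (1 - t)⁻¹ ^ n := by rw [Finset.prod_const, Finset.card_range]
  rw [h1]
  rw [div_le_div_iff₀ (mul_pos (qf_pos ht0 ht1 k) (qf_pos ht0 ht1 n)) (qf_pos ht0 ht1 n), mul_comm (pqFact 1 t k)]
  calc (∏ i ∈ Finset.range n, pqInt (1:ℝ) t (k + i + 1)) * pqFact 1 t k * pqFact 1 t n
      = pqFact 1 t k * ((∏ i ∈ Finset.range n, pqInt (1:ℝ) t (k + i + 1)) * pqFact 1 t n) := by ring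
    _ ≤ pqFact 1 t k * ((1 - t)⁻¹ ^ n * pqFact 1 t n) := by
        apply mul_le_mul_of_nonneg_left _ (qf_pos ht0 ht1 k).le
        exact mul_le_mul_of_nonneg_right hP (qf_pos ht0 ht1 n).le
    _ = (1 - t)⁻¹ ^ n * (pqFact 1 t k * pqFact 1 t n) := by ring

lemma qb_pascal (ht0 : 0 < t) (ht1 : t < 1) (n k : ℕ) :
    pqBinom 1 t (n + 1 + (k + 1)) (k + 1)
      = pqBinom 1 t (n + (k + 1)) (k + 1) + t ^ (n + 1) * pqBinom 1 t (n + 1 + k) k := by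
  rw [qb_eq, qb_eq, qb_eq]
  have e1 : n + 1 + (k + 1) = (n + k + 1) + 1 := by ring
  have e2 : n + (k + 1) = n + k + 1 := by ring
  have e3 : n + 1 + k = n + k + 1 := by ring
  rw [e1, e2, e3, qf_succ (n + k + 1), qf_succ k, qf_succ n]
  have key : pqInt (1:ℝ) t (n + k + 1 + 1) = pqInt 1 t (n + 1) + t ^ (n + 1) * pqInt 1 t (k + 1) := by
    have h4 : n + k + 1 + 1 = (n + 1) + (k + 1) := by ring
    rw [h4, qi_add]
  rw [key]
  have hk := (qf_pos ht0 ht1 k).ne'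
  have hn := (qf_pos ht0 ht1 n).ne'
  have hnk := (qf_pos ht0 ht1 (n + k + 1)).ne'
  have hk1 := (qi_pos ht0 ht1 (Nat.succ_pos k)).ne'
  have hn1 := (qi_pos ht0 ht1 (Nat.succ_pos n)).ne'
  field_simp

lemma qb_shift (ht0 : 0 < t) (ht1 : t < 1) (n k : ℕ) :
    pqBinom 1 t (n + (k + 1)) (k + 1) * (pqInt 1 t (k + 1) / pqInt 1 t (n + (k + 1)))
      = pqBinom 1 t (n + k) k := by
  rw [qb_eq, qb_eq]
  have e2 : n + (k + 1) = (n + k) + 1 := by ring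
  rw [e2, qf_succ (n + k), qf_succ k]
  have hk := (qf_pos ht0 ht1 k).ne'
  have hn := (qf_pos ht0 ht1 n).ne'
  have hnk := (qf_pos ht0 ht1 (n + k)).ne'
  have hk1 := (qi_pos ht0 ht1 (Nat.succ_pos k)).ne'
  have hnk1 := (qi_pos ht0 ht1 (Nat.succ_pos (n + k))).ne'
  field_simp

lemma summable_geom_bound {x C : ℝ} (hx0 : 0 ≤ x) (hx1 : x < 1) {f : ℕ → ℝ}
    (h : ∀ k, |f k| ≤ C * x ^ k) : Summable f := by
  apply Summable.of_abs
  exact Summable.of_nonneg_of_le (fun k => abs_nonneg _) h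
    ((summable_geometric_of_lt_one hx0 hx1).mul_left C)

lemma summable_qb (ht0 : 0 < t) (ht1 : t < 1) (n : ℕ) {x : ℝ} (hx0 : 0 ≤ x) (hx1 : x < 1)
    {g : ℕ → ℝ} {B : ℝ} (hg : ∀ k, |g k| ≤ B) :
    Summable (fun k => pqBinom 1 t (n + k) k * x ^ k * g k) := by
  apply summable_geom_bound hx0 hx1 (C := (1 - t)⁻¹ ^ n / pqFact 1 t n * B)
  intro k
  have h1 : 0 ≤ pqBinom 1 t (n + k) k := qb_nonneg ht0 ht1 n k
  have h2 : 0 ≤ x ^ k := pow_nonneg hx0 k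
  rw [abs_mul, abs_mul, abs_of_nonneg h1, abs_of_nonneg h2]
  have h3 : pqBinom 1 t (n + k) k * x ^ k * |g k| ≤ ((1 - t)⁻¹ ^ n / pqFact 1 t n) * x ^ k * B := by
    apply mul_le_mul (mul_le_mul_of_nonneg_right (qb_le ht0 ht1 n k) h2) (hg k) (abs_nonneg _)
    exact mul_nonneg (div_nonneg (pow_nonneg (inv_nonneg.mpr (by linarith)) n) (qf_pos ht0 ht1 n).le) h2
  linarith [h3]

lemma euler_key (ht0 : 0 < t) (ht1 : t < 1) (m : ℕ) {x : ℝ} (hx0 : 0 ≤ x) (hx1 : x < 1) :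
    (1 - t ^ (m + 1) * x) * ∑' k, pqBinom 1 t (m + 1 + k) k * x ^ k
      = ∑' k, pqBinom 1 t (m + k) k * x ^ k := by
  set S : ℕ → ℝ := fun k => pqBinom 1 t (m + 1 + k) k * x ^ k with hS
  have hSsum : Summable S := by
    have := summable_qb ht0 ht1 (m + 1) hx0 hx1 (g := fun _ => 1) (B := 1) (fun k => by simp)
    simpa using this
  set w : ℕ → ℝ := fun j => if j = 0 then 0 else t ^ (m + 1) * pqBinom 1 t (m + j) (j - 1) * x ^ j
    with hw
  have hwsucc : ∀ k, w (k + 1) = t ^ (m + 1) * x * S k := by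
    intro k
    simp only [hw, hS, Nat.succ_ne_zero, if_false, Nat.add_sub_cancel]
    have : m + (k + 1) = m + 1 + k := by ring
    rw [this]
    ring
  have hwsum : Summable w := by
    rw [← summable_nat_add_iff 1]
    simp only [hwsucc]
    exact (hSsum.mul_left _)
  have htw : ∑' j, w j = t ^ (m + 1) * x * ∑' k, S k := by
    have h0 : w 0 = 0 := by simp [hw]
    rw [Summable.tsum_eq_zero_add hwsum, h0, zero_add, tsum_congr hwsucc]
    exact tsum_mul_left
  have hmain : ∀ k, S k - w k = pqBinom 1 t (m + k) k * x ^ k := by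
    intro k
    cases k with
    | zero =>
      have h0 : w 0 = 0 := by simp [hw]
      rw [h0, sub_zero, hS]
      have h1 : pqBinom (1:ℝ) t (m + 1 + 0) 0 = 1 := qb_zero ht0 ht1 (m + 1)
      have h2 : pqBinom (1:ℝ) t (m + 0) 0 = 1 := qb_zero ht0 ht1 m
      simp only [h1, h2]
    | succ j =>
      simp only [hw, hS, Nat.succ_ne_zero, if_false, Nat.add_sub_cancel]
      have e : m + (j + 1) = m + 1 + j := by ring
      rw [qb_pascal ht0 ht1 m j]
      rw [e]
      ring
  calc (1 - t ^ (m + 1) * x) * ∑' k, S k = (∑' k, S k) - t ^ (m + 1) * x * ∑' k, S k := by ring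
    _ = (∑' k, S k) - ∑' j, w j := by rw [htw]
    _ = ∑' k, (S k - w k) := (Summable.tsum_sub hSsum hwsum).symm
    _ = ∑' k, pqBinom 1 t (m + k) k * x ^ k := by
        apply tsum_congr
        intro k; exact hmain k

lemma euler (ht0 : 0 < t) (ht1 : t < 1) (n : ℕ) {x : ℝ} (hx0 : 0 ≤ x) (hx1 : x < 1) :
    (∏ s ∈ Finset.range (n + 1), (1 - t ^ s * x)) * ∑' k, pqBinom 1 t (n + k) k * x ^ k = 1 := by
  induction n with
  | zero =>
    have h1 : ∀ k, pqBinom (1:ℝ) t (0 + k) k = 1 := by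
      intro k
      rw [qb_eq, qf_zero, zero_add, mul_one, div_self (qf_pos ht0 ht1 k).ne']
    simp only [h1, one_mul]
    rw [tsum_geometric_of_lt_one hx0 hx1]
    have : (∏ s ∈ Finset.range (0 + 1), (1 - t ^ s * x)) = 1 - x := by
      norm_num
    rw [this, mul_inv_cancel₀ (by linarith : (1:ℝ) - x ≠ 0)]
  | succ m ih =>
    rw [Finset.prod_range_succ]
    calc (∏ s ∈ Finset.range (m + 1), (1 - t ^ s * x)) * (1 - t ^ (m + 1) * x) *
          ∑' k, pqBinom 1 t (m + 1 + k) k * x ^ k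
        = (∏ s ∈ Finset.range (m + 1), (1 - t ^ s * x)) *
          ((1 - t ^ (m + 1) * x) * ∑' k, pqBinom 1 t (m + 1 + k) k * x ^ k) := by ring
      _ = (∏ s ∈ Finset.range (m + 1), (1 - t ^ s * x)) *
          ∑' k, pqBinom 1 t (m + k) k * x ^ k := by rw [euler_key ht0 ht1 m hx0 hx1]
      _ = 1 := ih

-- node values
noncomputable def qnode (t : ℝ) (n k : ℕ) : ℝ := pqInt 1 t k / pqInt 1 t (n + k)

lemma qnode_zero (n : ℕ) : qnode t n 0 = 0 := by
  simp [qnode, pqInt]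

lemma qnode_nonneg (ht0 : 0 < t) (ht1 : t < 1) (n k : ℕ) : 0 ≤ qnode t n k :=
  div_nonneg (qi_nonneg ht0 ht1 k) (qi_nonneg ht0 ht1 (n + k))

lemma qnode_le_one (ht0 : 0 < t) (ht1 : t < 1) (n k : ℕ) : qnode t n k ≤ 1 := by
  rcases Nat.eq_zero_or_pos k with h | h
  · rw [h, qnode_zero]; norm_num
  · rw [qnode, div_le_one (qi_pos ht0 ht1 (by omega))]
    exact qi_mono ht0 ht1 (by omega)

lemma qi_one (ht1 : t < 1) : pqInt (1:ℝ) t 1 = 1 := by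
  have h : (1:ℝ) - t ≠ 0 := by intro h; apply absurd ht1; linarith [sub_eq_zero.mp h]
  simp [pqInt, div_self h]

lemma qi_cross (ht1 : t < 1) (n k : ℕ) :
    pqInt 1 t (k + 1) * pqInt 1 t (n + k) - pqInt 1 t k * pqInt 1 t (n + k + 1)
      = t ^ k * pqInt 1 t n := by
  rw [qi_eq, qi_eq, qi_eq, qi_eq, qi_eq]
  have h : (1:ℝ) - t ≠ 0 := by intro h; apply absurd ht1; linarith [sub_eq_zero.mp h]
  field_simp
  ring_nf

-- key upper estimate on node increments
lemma qnode_succ_le (ht0 : 0 < t) (ht1 : t < 1) (n k : ℕ) :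
    qnode t n (k + 1) ≤ qnode t n k + (pqInt 1 t (n + 1))⁻¹ := by
  have hn1 : (0:ℝ) < pqInt 1 t (n + 1) := qi_pos ht0 ht1 (Nat.succ_pos n)
  rcases Nat.eq_zero_or_pos k with h | h
  · subst h
    simp only [zero_add]
    rw [qnode_zero, qnode, qi_one ht1, zero_add, one_div]
  · rcases Nat.eq_zero_or_pos n with hn | hn
    · subst hn
      have h1 : qnode t 0 (k + 1) = 1 := by
        rw [qnode, zero_add, div_self (qi_pos ht0 ht1 (Nat.succ_pos k)).ne']
      have h2 : qnode t 0 k = 1 := by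
        rw [qnode, zero_add, div_self (qi_pos ht0 ht1 h).ne']
      rw [h1, h2]
      have h3 : (0:ℝ) < (pqInt 1 t (0 + 1))⁻¹ := inv_pos.mpr hn1
      linarith
    · -- n ≥ 1, k ≥ 1
      have hnk : (0:ℝ) < pqInt 1 t (n + k) := qi_pos ht0 ht1 (by omega)
      have hnk1 : (0:ℝ) < pqInt 1 t (n + k + 1) := qi_pos ht0 ht1 (by omega)
      have hNN : (0:ℝ) < pqInt 1 t n := qi_pos ht0 ht1 hn
      have e : n + (k + 1) = n + k + 1 := by ring
      have key : qnode t n (k + 1) - qnode t n k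
          = t ^ k * pqInt 1 t n / (pqInt 1 t (n + k + 1) * pqInt 1 t (n + k)) := by
        rw [qnode, qnode, e, div_sub_div _ _ hnk1.ne' hnk.ne',
          mul_comm (pqInt 1 t (n + k + 1)) (pqInt 1 t k), qi_cross ht1 n k]
      have hA : pqInt 1 t (n + 1) ≤ pqInt 1 t (n + k + 1) := qi_mono ht0 ht1 (by omega)
      have hB : pqInt 1 t n ≤ pqInt 1 t (n + k) := qi_mono ht0 ht1 (by omega)
      have htk : t ^ k ≤ 1 := pow_le_one₀ ht0.le ht1.le
      have hmul : pqInt 1 t n * pqInt 1 t (n + 1) ≤ pqInt 1 t (n + k) * pqInt 1 t (n + k + 1) :=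
        mul_le_mul hB hA hn1.le hnk.le
      have hbound : t ^ k * pqInt 1 t n / (pqInt 1 t (n + k + 1) * pqInt 1 t (n + k))
          ≤ (pqInt 1 t (n + 1))⁻¹ := by
        rw [inv_eq_one_div, div_le_div_iff₀ (mul_pos hnk1 hnk) hn1]
        nlinarith [mul_nonneg hNN.le hn1.le, pow_nonneg ht0.le k]
      linarith [key, hbound]

-- Cauchy-Schwarz for tsum
lemma tsum_cauchy_schwarz {W a : ℕ → ℝ} (hW : ∀ k, 0 ≤ W k) (ha : ∀ k, 0 ≤ a k)
    (h1 : Summable W) (h2 : Summable (fun k => W k * a k))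
    (h3 : Summable (fun k => W k * a k ^ 2)) :
    (∑' k, W k * a k) ^ 2 ≤ (∑' k, W k) * ∑' k, W k * a k ^ 2 := by
  have key : ∀ s : Finset ℕ,
      (∑ k ∈ s, W k * a k) ^ 2 ≤ (∑' k, W k) * ∑' k, W k * a k ^ 2 := by
    intro s
    calc (∑ k ∈ s, W k * a k) ^ 2 ≤ (∑ k ∈ s, W k) * ∑ k ∈ s, W k * a k ^ 2 := by
          apply Finset.sum_sq_le_sum_mul_sum_of_sq_eq_mul s
            (fun i _ => hW i) (fun i _ => mul_nonneg (hW i) (sq_nonneg _))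
          intro i _
          ring
      _ ≤ (∑' k, W k) * ∑' k, W k * a k ^ 2 := by
          apply mul_le_mul (Summable.sum_le_tsum s (fun i _ => hW i) h1)
            (Summable.sum_le_tsum s (fun i _ => mul_nonneg (hW i) (sq_nonneg _)) h3)
            (Finset.sum_nonneg (fun i _ => mul_nonneg (hW i) (sq_nonneg _)))
            (tsum_nonneg hW)
  have htend : Filter.Tendsto (fun m => (∑ k ∈ Finset.range m, W k * a k) ^ 2)
      Filter.atTop (nhds ((∑' k, W k * a k) ^ 2)) :=
    (h2.hasSum.tendsto_sum_nat).pow 2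
  exact le_of_tendsto htend (Filter.Eventually.of_forall fun m => key _)


section basechange
variable {p q : ℝ} (hq : 0 < q) (hqp : q < p)

include hq hqp

lemma pqInt_scale (m : ℕ) : pqInt p q (m + 1) = p ^ m * pqInt 1 (q / p) (m + 1) := by
  have hp0 : 0 < p := hq.trans hqp
  have hpq : p - q ≠ 0 := by linarith
  have h1 : 1 - q / p ≠ 0 :=
    sub_ne_zero.mpr (ne_of_lt ((div_lt_one hp0).mpr hqp)).symm
  rw [pqInt, pqInt, one_pow, div_pow]
  field_simp
  ring

lemma pqFact_scale (n : ℕ) :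
    pqFact p q n = p ^ (∑ i ∈ Finset.range n, i) * pqFact 1 (q / p) n := by
  rw [pqFact, pqFact, ← Finset.prod_pow_eq_pow_sum, ← Finset.prod_mul_distrib]
  exact Finset.prod_congr rfl fun j _ => pqInt_scale hq hqp j

omit hq hqp in
lemma sum_range_split (n k : ℕ) :
    ∑ i ∈ Finset.range (n + k), i = (∑ i ∈ Finset.range k, i) + (∑ i ∈ Finset.range n, i) + k * n := by
  rw [add_comm n k, Finset.sum_range_add]
  have : ∑ i ∈ Finset.range n, (k + i) = n * k + ∑ i ∈ Finset.range n, i := by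
    rw [Finset.sum_add_distrib, Finset.sum_const, Finset.card_range, smul_eq_mul]
  rw [this]
  ring

lemma pqBinom_scale (n k : ℕ) :
    pqBinom p q (n + k) k = p ^ (k * n) * pqBinom 1 (q / p) (n + k) k := by
  have hp0 : 0 < p := hq.trans hqp
  have ht0 : 0 < q / p := div_pos hq hp0
  have ht1 : q / p < 1 := (div_lt_one hp0).mpr hqp
  rw [pqBinom, Nat.add_sub_cancel, qb_eq, pqFact_scale hq hqp, pqFact_scale hq hqp,
    pqFact_scale hq hqp, sum_range_split n k]
  have h1 := (qf_pos ht0 ht1 k).ne'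
  have h2 := (qf_pos ht0 ht1 n).ne'
  rw [pow_add, pow_add]
  field_simp

lemma prod_scale (n : ℕ) (x : ℝ) :
    ∏ s ∈ Finset.range (n + 1), (p ^ s - q ^ s * x)
      = p ^ (∑ s ∈ Finset.range (n + 1), s) *
        ∏ s ∈ Finset.range (n + 1), (1 - (q / p) ^ s * x) := by
  have hp0 : 0 < p := hq.trans hqp
  rw [← Finset.prod_pow_eq_pow_sum, ← Finset.prod_mul_distrib]
  apply Finset.prod_congr rfl
  intro s _
  rw [div_pow]
  field_simp

lemma node_scale (n k : ℕ) :
    p ^ n * pqInt p q k / pqInt p q (n + k) = qnode (q / p) n k := by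
  have hp0 : 0 < p := hq.trans hqp
  have ht0 : 0 < q / p := div_pos hq hp0
  have ht1 : q / p < 1 := (div_lt_one hp0).mpr hqp
  cases k with
  | zero => simp [pqInt, qnode_zero]
  | succ j =>
    have e : n + (j + 1) = (n + j) + 1 := by ring
    rw [qnode, e, pqInt_scale hq hqp j, pqInt_scale hq hqp (n + j)]
    rw [show p ^ n * (p ^ j * pqInt 1 (q/p) (j+1)) = p ^ (n + j) * pqInt 1 (q/p) (j+1) by
      rw [pow_add]; ring]
    rw [mul_div_mul_left _ _ (pow_ne_zero (n + j) hp0.ne')]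

lemma mkz_eq (n : ℕ) (f : ℝ → ℝ) {x : ℝ} (hx1 : x ≠ 1) :
    mkz p q n f x = ∑' k, (∏ s ∈ Finset.range (n + 1), (1 - (q / p) ^ s * x)) *
      pqBinom 1 (q / p) (n + k) k * x ^ k * f (qnode (q / p) n k) := by
  have hp0 : 0 < p := hq.trans hqp
  have hE : p ^ (n * (n + 1) / 2) = p ^ (∑ s ∈ Finset.range (n + 1), s) := by
    congr 1
    rw [Finset.sum_range_id]
    simp [Nat.mul_comm]
  rw [mkz, if_neg hx1]
  have hterm : ∀ k : ℕ, pqBinom p q (n + k) k * x ^ k * (p ^ (k * n))⁻¹ *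
        (∏ s ∈ Finset.range (n + 1), (p ^ s - q ^ s * x)) *
        f (p ^ n * pqInt p q k / pqInt p q (n + k))
      = p ^ (∑ s ∈ Finset.range (n + 1), s) *
        ((∏ s ∈ Finset.range (n + 1), (1 - (q / p) ^ s * x)) *
          pqBinom 1 (q / p) (n + k) k * x ^ k * f (qnode (q / p) n k)) := by
    intro k
    rw [pqBinom_scale hq hqp, prod_scale hq hqp, node_scale hq hqp]
    have hkn : (p : ℝ) ^ (k * n) ≠ 0 := pow_ne_zero _ hp0.ne'
    field_simp
    ring
  rw [tsum_congr hterm, tsum_mul_left, hE, ← mul_assoc,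
    inv_mul_cancel₀ (pow_ne_zero _ hp0.ne'), one_mul]

end basechange


end auxMKZ

theorem mkz_sq (p q : ℝ) (hq : 0 < q) (hqp : q < p) (hp : p ≤ 1)
    (n : ℕ) (x : ℝ) (hx : x ∈ Set.Icc (0 : ℝ) 1) :
    x ^ 2 ≤ mkz p q n (fun t => t ^ 2) x ∧
    mkz p q n (fun t => t ^ 2) x ≤ p ^ n / pqInt p q (n + 1) * x + x ^ 2 := by
  obtain ⟨hx0, hx1⟩ := hx
  have hp0 : 0 < p := hq.trans hqp
  set r : ℝ := q / p with hr
  have hr0 : 0 < r := div_pos hq hp0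
  have hr1 : r < 1 := (div_lt_one hp0).mpr hqp
  have hconv : p ^ n / pqInt p q (n + 1) = (pqInt 1 r (n + 1))⁻¹ := by
    rw [pqInt_scale hq hqp n, ← div_div, div_self (pow_ne_zero n hp0.ne'), one_div]
  have hinv_pos : (0 : ℝ) < (pqInt 1 r (n + 1))⁻¹ :=
    inv_pos.mpr (qi_pos hr0 hr1 (Nat.succ_pos n))
  rcases eq_or_lt_of_le hx1 with hxe | hxlt
  · -- x = 1
    subst hxe
    rw [mkz, if_pos rfl]
    have h2 : (0:ℝ) ≤ p ^ n / pqInt p q (n + 1) := by rw [hconv]; exact hinv_pos.le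
    constructor
    · exact le_refl ((1:ℝ) ^ 2)
    · show ((1:ℝ)) ^ 2 ≤ p ^ n / pqInt p q (n + 1) * 1 + 1 ^ 2
      nlinarith [h2]
  · -- x < 1
    set P : ℝ := ∏ s ∈ Finset.range (n + 1), (1 - r ^ s * x) with hPdef
    have hP : 0 ≤ P := by
      apply Finset.prod_nonneg
      intro s _
      have h1 : r ^ s ≤ 1 := pow_le_one₀ hr0.le hr1.le
      have h2 : r ^ s * x ≤ 1 * x := mul_le_mul_of_nonneg_right h1 hx0
      linarith
    set W : ℕ → ℝ := fun k => P * pqBinom 1 r (n + k) k * x ^ k with hWdef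
    have hW0 : ∀ k, 0 ≤ W k := fun k =>
      mul_nonneg (mul_nonneg hP (qb_nonneg hr0 hr1 n k)) (pow_nonneg hx0 k)
    have hsum : ∀ (g : ℕ → ℝ) (B : ℝ), (∀ k, |g k| ≤ B) → Summable fun k => W k * g k := by
      intro g B hg
      apply ((summable_qb hr0 hr1 n hx0 hxlt (B := B) hg).mul_left P).congr
      intro k
      simp only [hWdef]
      ring
    have habs1 : ∀ k : ℕ, |(1 : ℝ)| ≤ 1 := fun k => by norm_num
    have hnode_abs : ∀ k, |qnode r n k| ≤ 1 := fun k => by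
      rw [abs_of_nonneg (qnode_nonneg hr0 hr1 n k)]; exact qnode_le_one hr0 hr1 n k
    have hnode1_abs : ∀ k, |qnode r n (k + 1)| ≤ 1 := fun k => hnode_abs (k + 1)
    have hnode2_abs : ∀ k, |qnode r n k ^ 2| ≤ 1 := fun k => by
      rw [abs_of_nonneg (sq_nonneg _), sq]
      calc qnode r n k * qnode r n k ≤ 1 * 1 := by
            apply mul_le_mul (qnode_le_one hr0 hr1 n k) (qnode_le_one hr0 hr1 n k)
              (qnode_nonneg hr0 hr1 n k) zero_le_one
        _ = 1 := one_mul 1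
    have hWsum : Summable W := by
      have := hsum (fun _ => 1) 1 habs1
      apply this.congr
      intro k; ring
    have hWtsum : ∑' k, W k = 1 := by
      have h1 : ∀ k, W k = P * (pqBinom 1 r (n + k) k * x ^ k) := by
        intro k; simp only [hWdef]; ring
      rw [tsum_congr h1, tsum_mul_left, euler hr0 hr1 n hx0 hxlt]
    have hsucc : ∀ k, W (k + 1) * qnode r n (k + 1) = x * W k := by
      intro k
      have hsh := qb_shift hr0 hr1 n k
      calc W (k + 1) * qnode r n (k + 1)
          = P * (pqBinom 1 r (n + (k + 1)) (k + 1) *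
              (pqInt 1 r (k + 1) / pqInt 1 r (n + (k + 1)))) * x ^ (k + 1) := by
            simp only [hWdef, qnode]; ring
        _ = P * pqBinom 1 r (n + k) k * x ^ (k + 1) := by rw [hsh]
        _ = x * W k := by simp only [hWdef, pow_succ]; ring
    have hsnode : Summable fun k => W k * qnode r n k := hsum _ 1 hnode_abs
    have hsnode1 : Summable fun k => W k * qnode r n (k + 1) := hsum _ 1 hnode1_abs
    have hsnode2 : Summable fun k => W k * qnode r n k ^ 2 := hsum _ 1 hnode2_abs
    have M1 : ∑' k, W k * qnode r n k = x := by
      rw [Summable.tsum_eq_zero_add hsnode]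
      have h0 : W 0 * qnode r n 0 = 0 := by rw [qnode_zero]; ring
      rw [h0, zero_add,
        show (∑' k, W (k + 1) * qnode r n (k + 1)) = ∑' k, x * W k from tsum_congr hsucc,
        tsum_mul_left, hWtsum, mul_one]
    have M2 : ∑' k, W k * qnode r n k ^ 2 = x * ∑' k, W k * qnode r n (k + 1) := by
      rw [Summable.tsum_eq_zero_add hsnode2]
      have h0 : W 0 * qnode r n 0 ^ 2 = 0 := by rw [qnode_zero]; ring
      have hsucc2 : ∀ k, W (k + 1) * qnode r n (k + 1) ^ 2 = x * (W k * qnode r n (k + 1)) := by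
        intro k
        calc W (k + 1) * qnode r n (k + 1) ^ 2
            = (W (k + 1) * qnode r n (k + 1)) * qnode r n (k + 1) := by ring
          _ = (x * W k) * qnode r n (k + 1) := by rw [hsucc k]
          _ = x * (W k * qnode r n (k + 1)) := by ring
      rw [h0, zero_add,
        show (∑' k, W (k + 1) * qnode r n (k + 1) ^ 2)
          = ∑' k, x * (W k * qnode r n (k + 1)) from tsum_congr hsucc2,
        tsum_mul_left]
    have hrepr : mkz p q n (fun t => t ^ 2) x = ∑' k, W k * qnode r n k ^ 2 := by
      rw [mkz_eq hq hqp n _ (ne_of_lt hxlt)]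
    constructor
    · -- lower bound
      rw [hrepr]
      have hcs := tsum_cauchy_schwarz hW0 (qnode_nonneg hr0 hr1 n) hWsum hsnode hsnode2
      rw [M1, hWtsum, one_mul] at hcs
      exact hcs
    · -- upper bound
      rw [hrepr, M2, hconv]
      have hA : ∑' k, W k * qnode r n (k + 1) ≤ x + (pqInt 1 r (n + 1))⁻¹ := by
        have hle : ∀ k, W k * qnode r n (k + 1)
            ≤ W k * (qnode r n k + (pqInt 1 r (n + 1))⁻¹) := fun k =>
          mul_le_mul_of_nonneg_left (qnode_succ_le hr0 hr1 n k) (hW0 k)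
        have hsR : Summable fun k => W k * (qnode r n k + (pqInt 1 r (n + 1))⁻¹) := by
          apply hsum _ (1 + (pqInt 1 r (n + 1))⁻¹)
          intro k
          have h1 := qnode_nonneg hr0 hr1 n k
          have h2 := qnode_le_one hr0 hr1 n k
          rw [abs_of_nonneg (by linarith [hinv_pos.le] :
            (0:ℝ) ≤ qnode r n k + (pqInt 1 r (n + 1))⁻¹)]
          linarith
        calc ∑' k, W k * qnode r n (k + 1)
            ≤ ∑' k, W k * (qnode r n k + (pqInt 1 r (n + 1))⁻¹) :=
              Summable.tsum_le_tsum hle hsnode1 hsR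
          _ = (∑' k, W k * qnode r n k) + ∑' k, W k * (pqInt 1 r (n + 1))⁻¹ := by
              rw [← Summable.tsum_add hsnode (hsum _ ((pqInt 1 r (n + 1))⁻¹) (fun k => by
                rw [abs_of_nonneg hinv_pos.le]))]
              apply tsum_congr
              intro k; ring
          _ = x + (pqInt 1 r (n + 1))⁻¹ := by
              rw [M1, tsum_mul_right, hWtsum, one_mul]
      calc x * ∑' k, W k * qnode r n (k + 1) ≤ x * (x + (pqInt 1 r (n + 1))⁻¹) :=
            mul_le_mul_of_nonneg_left hA hx0
        _ = (pqInt 1 r (n + 1))⁻¹ * x + x ^ 2 := by ring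
end
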